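/- Let (Xₙ, Yₙ) be an irreducible aperiodic Markov chain on ℤ₊² and suppose there exist constants M^X, M^Y, c > 0, a function L : ℤ₊² → ℝ₊, and a function T : ℤ₊² → ℤ₊ with sup_{(x,y)} T(x,y)/L(x,y) < ∞, sup_{x ≤ M^X, y ≤ M^Y} E[L(X_{T(x,y)}, Y_{T(x,y)}) - L(x,y) | (X₀,Y₀)=(x,y)] < ∞, and E[L(X_{T(x,y)}, Y_{T(x,y)}) - L(x,y) | (X₀,Y₀)=(x,y)] ≤ -c·T(x,y) whenever x > M^X or y > M^Y. Then (Xₙ,Yₙ) is positive recurrent. -/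

import Mathlib

open ENNReal Filter Topology

noncomputable def kpow {S : Type*} [DecidableEq S] (P : S → S → ℝ) : ℕ → S → S → ℝ
  | 0, s, s' => if s = s' then 1 else 0
  | n + 1, s, s' => ∑' u, P s u * kpow P n u s'

namespace FKaux

variable {S : Type*} [DecidableEq S]

noncomputable def kE (Pe : S → S → ℝ≥0∞) : ℕ → S → S → ℝ≥0∞
  | 0, s, s' => if s = s' then 1 else 0
  | n + 1, s, s' => ∑' u, Pe s u * kE Pe n u s'

lemma tsum_delta_mul (s : S) (f : S → ℝ≥0∞) :
    ∑' s', (if s = s' then (1:ℝ≥0∞) else 0) * f s' = f s := by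
  rw [tsum_eq_single s (by intro b hb; simp [Ne.symm hb])]
  simp

lemma tsum_mul_delta (s : S) (f : S → ℝ≥0∞) :
    ∑' s', f s' * (if s' = s then (1:ℝ≥0∞) else 0) = f s := by
  rw [tsum_eq_single s (by intro b hb; simp [hb])]
  simp

lemma kE_rowsum {Pe : S → S → ℝ≥0∞} (h : ∀ s, ∑' u, Pe s u = 1) :
    ∀ n s, ∑' s', kE Pe n s s' = 1 := by
  intro n
  induction n with
  | zero =>
    intro s
    have h := tsum_delta_mul s (fun _ => (1:ℝ≥0∞))
    simp only [mul_one] at h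
    exact h
  | succ n ih =>
    intro s
    rw [show (fun s' => kE Pe (n+1) s s') = fun s' => ∑' u, Pe s u * kE Pe n u s' from rfl]
    rw [ENNReal.tsum_comm]
    calc ∑' u, ∑' s', Pe s u * kE Pe n u s'
        = ∑' u, Pe s u * ∑' s', kE Pe n u s' := by
          congr 1; funext u; rw [ENNReal.tsum_mul_left]
      _ = ∑' u, Pe s u := by simp [ih]
      _ = 1 := h s

lemma kE_le_one {Pe : S → S → ℝ≥0∞} (h : ∀ s, ∑' u, Pe s u = 1) (n : ℕ) (s s' : S) :
    kE Pe n s s' ≤ 1 := by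
  rw [← kE_rowsum h n s]
  exact ENNReal.le_tsum s'

lemma kE_ne_top {Pe : S → S → ℝ≥0∞} (h : ∀ s, ∑' u, Pe s u = 1) (n : ℕ) (s s' : S) :
    kE Pe n s s' ≠ ⊤ :=
  (lt_of_le_of_lt (kE_le_one h n s s') one_lt_top).ne

lemma kE_succ' (Pe : S → S → ℝ≥0∞) :
    ∀ n s s', kE Pe (n+1) s s' = ∑' u, kE Pe n s u * Pe u s' := by
  intro n
  induction n with
  | zero =>
    intro s s'
    show ∑' u, Pe s u * kE Pe 0 u s' = _
    rw [show (fun u => kE Pe 0 s u * Pe u s') = fun u => (if s = u then (1:ℝ≥0∞) else 0) * Pe u s'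
      from rfl, tsum_delta_mul]
    show ∑' u, Pe s u * (if u = s' then (1:ℝ≥0∞) else 0) = _
    rw [tsum_mul_delta]
  | succ n ih =>
    intro s s'
    show ∑' u, Pe s u * kE Pe (n+1) u s' = _
    calc ∑' u, Pe s u * kE Pe (n+1) u s'
        = ∑' u, Pe s u * ∑' q, kE Pe n u q * Pe q s' := by
          congr 1; funext u; rw [ih]
      _ = ∑' u, ∑' q, Pe s u * (kE Pe n u q * Pe q s') := by
          congr 1; funext u; rw [ENNReal.tsum_mul_left]
      _ = ∑' q, ∑' u, Pe s u * kE Pe n u q * Pe q s' := by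
          rw [ENNReal.tsum_comm]; simp_rw [mul_assoc]
      _ = ∑' q, (∑' u, Pe s u * kE Pe n u q) * Pe q s' := by
          congr 1; funext q; rw [ENNReal.tsum_mul_right]
      _ = ∑' q, kE Pe (n+1) s q * Pe q s' := rfl

lemma kpow_toReal (P : S → S → ℝ) (hP0 : ∀ p q, 0 ≤ P p q)
    (h1 : ∀ s, ∑' u, ENNReal.ofReal (P s u) = 1) :
    ∀ n s s', kpow P n s s' = (kE (fun p q => ENNReal.ofReal (P p q)) n s s').toReal := by
  intro n
  set Pe := fun p q => ENNReal.ofReal (P p q) with hPe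
  induction n with
  | zero =>
    intro s s'
    show (if s = s' then (1:ℝ) else 0) = _
    by_cases h : s = s' <;> simp [kE, h]
  | succ n ih =>
    intro s s'
    show ∑' u, P s u * kpow P n u s' = _
    have : ∀ u, P s u * kpow P n u s' = (Pe s u * kE Pe n u s').toReal := by
      intro u
      rw [ih, ENNReal.toReal_mul, ENNReal.toReal_ofReal (hP0 s u)]
    rw [show (fun u => P s u * kpow P n u s') = fun u => (Pe s u * kE Pe n u s').toReal
      from funext this]
    rw [← ENNReal.tsum_toReal_eq (fun u => ENNReal.mul_ne_top ofReal_ne_top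
      (kE_ne_top h1 n u s'))]
    rfl

noncomputable def iterMeas (Q : S → S → ℝ≥0∞) (p0 : S) : ℕ → S → ℝ≥0∞
  | 0, p => if p = p0 then 1 else 0
  | n + 1, q => ∑' p, iterMeas Q p0 n p * Q p q

lemma iterMeas_pair (Q : S → S → ℝ≥0∞) (p0 : S) (n : ℕ) (f : S → ℝ≥0∞) :
    ∑' q, iterMeas Q p0 (n+1) q * f q
      = ∑' p, iterMeas Q p0 n p * ∑' q, Q p q * f q := by
  calc ∑' q, (∑' p, iterMeas Q p0 n p * Q p q) * f q
      = ∑' q, ∑' p, iterMeas Q p0 n p * Q p q * f q := by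
        congr 1; funext q; rw [ENNReal.tsum_mul_right]
    _ = ∑' p, ∑' q, iterMeas Q p0 n p * (Q p q * f q) := by
        rw [ENNReal.tsum_comm]; simp_rw [mul_assoc]
    _ = ∑' p, iterMeas Q p0 n p * ∑' q, Q p q * f q := by
        congr 1; funext p; rw [ENNReal.tsum_mul_left]

lemma iterMeas_mass {Q : S → S → ℝ≥0∞} (hQ : ∀ p, ∑' q, Q p q = 1) (p0 : S) :
    ∀ n, ∑' p, iterMeas Q p0 n p = 1 := by
  intro n
  induction n with
  | zero =>
    show ∑' p, (if p = p0 then (1:ℝ≥0∞) else 0) = 1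
    exact tsum_ite_eq p0 (fun _ => (1 : ℝ≥0∞))
  | succ n ih =>
    calc ∑' q, iterMeas Q p0 (n+1) q
        = ∑' q, iterMeas Q p0 (n+1) q * 1 := by simp
      _ = ∑' p, iterMeas Q p0 n p * ∑' q, Q p q * 1 := iterMeas_pair Q p0 n _
      _ = 1 := by simp [hQ, ih]

lemma iterMeas_le_one {Q : S → S → ℝ≥0∞} (hQ : ∀ p, ∑' q, Q p q = 1) (p0 : S) (n : ℕ) (p : S) :
    iterMeas Q p0 n p ≤ 1 := by
  rw [← iterMeas_mass hQ p0 n]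
  exact ENNReal.le_tsum p

end FKaux

def IrreducibleKernel {S : Type*} [DecidableEq S] (P : S → S → ℝ) : Prop :=
  ∀ s s', ∃ n, 0 < kpow P n s s'

def AperiodicKernel {S : Type*} [DecidableEq S] (P : S → S → ℝ) : Prop :=
  ∀ s, ∃ N, ∀ n, N ≤ n → 0 < kpow P n s s

def PositiveRecurrent {S : Type*} (P : S → S → ℝ) : Prop :=
  ∃ π : S → ℝ, (∀ s, 0 ≤ π s) ∧ (∑' s, π s = 1) ∧
    ∀ s', ∑' s, π s * P s s' = π s'

/-- the Foster–Lyapunov criterion with state-dependent drift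
times (Foss–Konstantopoulos) for a chain on `ℤ₊²`. -/
theorem stmt_11 (P : ℕ × ℕ → ℕ × ℕ → ℝ)
    (hP0 : ∀ p p', 0 ≤ P p p') (hP1 : ∀ p, ∑' p', P p p' = 1)
    (hirr : IrreducibleKernel P) (hap : AperiodicKernel P)
    (L : ℕ × ℕ → ℝ) (hL0 : ∀ p, 0 ≤ L p)
    (T : ℕ × ℕ → ℕ) (hT1 : ∀ p, 1 ≤ T p)
    (MX MY : ℕ) (c : ℝ) (hc : 0 < c)
    (hInt : ∀ p n, Summable (fun p' => kpow P n p p' * L p'))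
    (hratio : ∃ K : ℝ, ∀ p, (T p : ℝ) ≤ K * L p)
    (hbdd : ∃ B : ℝ, ∀ x y, x ≤ MX → y ≤ MY →
      (∑' p', kpow P (T (x, y)) (x, y) p' * L p') - L (x, y) ≤ B)
    (hdrift : ∀ x y, (MX < x ∨ MY < y) →
      (∑' p', kpow P (T (x, y)) (x, y) p' * L p') - L (x, y) ≤ -c * T (x, y)) :
    PositiveRecurrent P := by
  classical
  obtain ⟨B, hB⟩ := hbdd
  set Pe : ℕ × ℕ → ℕ × ℕ → ℝ≥0∞ := fun p q => ENNReal.ofReal (P p q) with hPedef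
  have hPsum : ∀ p, Summable (P p) := by
    intro p
    by_contra h
    have := hP1 p
    rw [tsum_eq_zero_of_not_summable h] at this
    norm_num at this
  have hPe1 : ∀ p, ∑' q, Pe p q = 1 := by
    intro p
    rw [hPedef, ← ENNReal.ofReal_tsum_of_nonneg (hP0 p) (hPsum p), hP1 p, ENNReal.ofReal_one]
  have hk : ∀ n p q, kpow P n p q = (FKaux.kE Pe n p q).toReal :=
    FKaux.kpow_toReal P hP0 hPe1
  have hkne : ∀ n p q, FKaux.kE Pe n p q ≠ ⊤ := FKaux.kE_ne_top hPe1
  have hkrow : ∀ n p, ∑' q, FKaux.kE Pe n p q = 1 := FKaux.kE_rowsum hPe1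
  have hkpow0 : ∀ n p q, 0 ≤ kpow P n p q := fun n p q => by
    rw [hk]; exact ENNReal.toReal_nonneg
  set Le : ℕ × ℕ → ℝ≥0∞ := fun p => ENNReal.ofReal (L p) with hLedef
  set Q : ℕ × ℕ → ℕ × ℕ → ℝ≥0∞ := fun p q => FKaux.kE Pe (T p) p q with hQdef
  have hQrow : ∀ p, ∑' q, Q p q = 1 := fun p => hkrow (T p) p
  have hQle1 : ∀ p q, Q p q ≤ 1 := fun p q => FKaux.kE_le_one hPe1 _ p q
  have hQne : ∀ p q, Q p q ≠ ⊤ := fun p q => hkne _ p q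
  set SL : ℕ × ℕ → ℝ := fun p => ∑' q, kpow P (T p) p q * L q with hSLdef
  have hSL0 : ∀ p, 0 ≤ SL p := fun p => tsum_nonneg fun q => mul_nonneg (hkpow0 _ _ _) (hL0 q)
  have hQL : ∀ p, ∑' q, Q p q * Le q = ENNReal.ofReal (SL p) := by
    intro p
    rw [hSLdef]
    rw [ENNReal.ofReal_tsum_of_nonneg (fun q => mul_nonneg (hkpow0 _ _ _) (hL0 q)) (hInt p (T p))]
    congr 1
    funext q
    rw [ENNReal.ofReal_mul (hkpow0 _ _ _), hk, ENNReal.ofReal_toReal (hkne _ _ _)]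
  -- the finite set and constants
  set F : Finset (ℕ × ℕ) := Finset.range (MX + 1) ×ˢ Finset.range (MY + 1) with hFdef
  have hF : ∀ p : ℕ × ℕ, p ∈ F ↔ p.1 ≤ MX ∧ p.2 ≤ MY := by
    intro p
    simp [hFdef, Finset.mem_product, Nat.lt_succ_iff]
  set maxT : ℕ := F.sup T with hmaxT
  set b : ℝ := max B 0 + c * maxT + 1 with hbdef
  have hbpos : 0 < b := by
    have h1 : (0:ℝ) ≤ max B 0 := le_max_right _ _
    have h2 : (0:ℝ) ≤ c * maxT := mul_nonneg hc.le (Nat.cast_nonneg _)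
    rw [hbdef]; linarith
  set be : ℝ≥0∞ := ENNReal.ofReal b with hbedef
  set ce : ℝ≥0∞ := ENNReal.ofReal c with hcedef
  have hce0 : ce ≠ 0 := by
    rw [hcedef]; simp [ENNReal.ofReal_eq_zero, not_le, hc]
  have hcene : ce ≠ ⊤ := ofReal_ne_top
  have hbene : be ≠ ⊤ := ofReal_ne_top
  set Te : ℕ × ℕ → ℝ≥0∞ := fun p => (T p : ℝ≥0∞) with hTedef
  have hTene : ∀ p, Te p ≠ ⊤ := fun p => natCast_ne_top _
  have hceTe : ∀ p, ce * Te p = ENNReal.ofReal (c * T p) := by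
    intro p
    rw [hcedef, hTedef, ENNReal.ofReal_mul hc.le, ENNReal.ofReal_natCast]
  have hTe1 : ∀ p, 1 ≤ Te p := by
    intro p
    rw [hTedef]
    exact_mod_cast Nat.one_le_cast.mpr (hT1 p)
  have hmaster : ∀ p, ENNReal.ofReal (SL p) + ce * Te p
      ≤ Le p + (if p ∈ F then be else 0) := by
    intro p
    by_cases hpF : p ∈ F
    · have hx := ((hF p).mp hpF).1
      have hy := ((hF p).mp hpF).2
      have h1 : SL p - L p ≤ B := by
        obtain ⟨x, y⟩ := p
        exact hB x y hx hy
      have h2 : (T p : ℝ) ≤ (maxT : ℝ) := by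
        exact_mod_cast Finset.le_sup (f := T) hpF
      have h3 : c * T p ≤ c * maxT := mul_le_mul_of_nonneg_left h2 hc.le
      have h4 : SL p + c * T p ≤ L p + b := by
        have : B ≤ max B 0 := le_max_left _ _
        rw [hbdef]; linarith
      calc ENNReal.ofReal (SL p) + ce * Te p
          = ENNReal.ofReal (SL p + c * T p) := by
            rw [hceTe, ENNReal.ofReal_add (hSL0 p) (mul_nonneg hc.le (Nat.cast_nonneg _))]
        _ ≤ ENNReal.ofReal (L p + b) := ENNReal.ofReal_le_ofReal h4
        _ = Le p + (if p ∈ F then be else 0) := by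
            rw [if_pos hpF, ENNReal.ofReal_add (hL0 p) hbpos.le]
    · have hxy : MX < p.1 ∨ MY < p.2 := by
        by_contra hcon
        push_neg at hcon
        exact hpF ((hF p).mpr ⟨hcon.1, hcon.2⟩)
      have h1 : SL p - L p ≤ -c * T p := by
        obtain ⟨x, y⟩ := p
        exact hdrift x y hxy
      have h4 : SL p + c * T p ≤ L p := by linarith
      calc ENNReal.ofReal (SL p) + ce * Te p
          = ENNReal.ofReal (SL p + c * T p) := by
            rw [hceTe, ENNReal.ofReal_add (hSL0 p) (mul_nonneg hc.le (Nat.cast_nonneg _))]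
        _ ≤ Le p := ENNReal.ofReal_le_ofReal h4
        _ ≤ Le p + (if p ∈ F then be else 0) := le_self_add
  -- iterates of the embedded kernel
  set p0 : ℕ × ℕ := (0, 0) with hp0
  set qn : ℕ → ℕ × ℕ → ℝ≥0∞ := FKaux.iterMeas Q p0 with hqn
  have hqmass : ∀ n, ∑' p, qn n p = 1 := FKaux.iterMeas_mass hQrow p0
  have hqle1 : ∀ n p, qn n p ≤ 1 := FKaux.iterMeas_le_one hQrow p0
  set A : ℕ → ℝ≥0∞ := fun k => ∑' p, qn k p * Le p with hA
  set C : ℕ → ℝ≥0∞ := fun k => ∑' p, qn k p * Te p with hC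
  set D : ℕ → ℝ≥0∞ := fun k => ∑ p ∈ F, qn k p with hD
  have hD1 : ∀ k, D k ≤ 1 := fun k => le_trans (ENNReal.sum_le_tsum F) (le_of_eq (hqmass k))
  have hC1 : ∀ k, 1 ≤ C k := by
    intro k
    calc (1:ℝ≥0∞) = ∑' p, qn k p := (hqmass k).symm
      _ ≤ ∑' p, qn k p * Te p :=
          ENNReal.tsum_le_tsum fun p => le_mul_of_one_le_right' (hTe1 p)
  have hstep : ∀ k, A (k+1) + ce * C k ≤ A k + be * D k := by
    intro k
    have e1 : A (k+1) = ∑' p, qn k p * ∑' q, Q p q * Le q :=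
      FKaux.iterMeas_pair Q p0 k Le
    have e2 : ce * C k = ∑' p, qn k p * (ce * Te p) := by
      rw [hC, ← ENNReal.tsum_mul_left]
      congr 1; funext p; ring
    have e3 : ∑' p, qn k p * (if p ∈ F then be else 0) = be * D k := by
      rw [tsum_eq_sum (s := F) (by intro p hp; rw [if_neg hp, mul_zero])]
      rw [hD, Finset.mul_sum]
      refine Finset.sum_congr rfl fun p hp => ?_
      rw [if_pos hp]; ring
    calc A (k+1) + ce * C k
        = ∑' p, (qn k p * ∑' q, Q p q * Le q + qn k p * (ce * Te p)) := by
          rw [ENNReal.tsum_add, ← e1, ← e2]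
      _ = ∑' p, qn k p * (ENNReal.ofReal (SL p) + ce * Te p) := by
          congr 1; funext p; rw [hQL p, mul_add]
      _ ≤ ∑' p, qn k p * (Le p + (if p ∈ F then be else 0)) :=
          ENNReal.tsum_le_tsum fun p => mul_le_mul_right (hmaster p) _
      _ = A k + be * D k := by
          rw [show (fun p => qn k p * (Le p + (if p ∈ F then be else 0)))
              = fun p => qn k p * Le p + qn k p * (if p ∈ F then be else 0) by
            funext p; rw [mul_add]]
          rw [ENNReal.tsum_add, e3]
  have hA0 : A 0 = Le p0 := by
    have hpt : ∀ p, qn 0 p * Le p = if p = p0 then Le p else 0 := by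
      intro p; by_cases h : p = p0 <;> simp [hqn, FKaux.iterMeas, h]
    calc A 0 = ∑' p, (if p = p0 then Le p else 0) := tsum_congr hpt
      _ = Le p0 := by rw [tsum_eq_single p0 (fun b hb => if_neg hb)]; simp
  have hAfin : ∀ k, A k ≠ ⊤ := by
    intro k
    induction k with
    | zero => rw [hA0]; exact ofReal_ne_top
    | succ k ih =>
      have h1 : A (k+1) ≤ A k + be * D k :=
        le_trans le_self_add (hstep k)
      have h2 : A k + be * D k ≠ ⊤ :=
        ENNReal.add_ne_top.mpr ⟨ih, ENNReal.mul_ne_top hbene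
          (lt_of_le_of_lt (hD1 k) one_lt_top).ne⟩
      exact (lt_of_le_of_lt h1 (lt_top_iff_ne_top.mpr h2)).ne
  have htel : ∀ n, A n + ce * ∑ k ∈ Finset.range n, C k
      ≤ A 0 + be * ∑ k ∈ Finset.range n, D k := by
    intro n
    induction n with
    | zero => simp
    | succ n ih =>
      calc A (n+1) + ce * ∑ k ∈ Finset.range (n+1), C k
          = (A (n+1) + ce * C n) + ce * ∑ k ∈ Finset.range n, C k := by
            rw [Finset.sum_range_succ, mul_add]; ring
        _ ≤ (A n + be * D n) + ce * ∑ k ∈ Finset.range n, C k :=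
            add_le_add_left (hstep n) _
        _ = (A n + ce * ∑ k ∈ Finset.range n, C k) + be * D n := by ring
        _ ≤ (A 0 + be * ∑ k ∈ Finset.range n, D k) + be * D n :=
            add_le_add_left ih _
        _ = A 0 + be * ∑ k ∈ Finset.range (n+1), D k := by
            rw [Finset.sum_range_succ, mul_add]; ring
  -- Cesàro averages
  set μ : ℕ → ℕ × ℕ → ℝ≥0∞ :=
    fun n p => (n:ℝ≥0∞)⁻¹ * ∑ k ∈ Finset.range n, qn k p with hμ
  have hswap : ∀ (n:ℕ) (g : ℕ × ℕ → ℝ≥0∞),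
      ∑' p, μ n p * g p
        = (n:ℝ≥0∞)⁻¹ * ∑ k ∈ Finset.range n, ∑' p, qn k p * g p := by
    intro n g
    calc ∑' p, μ n p * g p
        = ∑' p, (n:ℝ≥0∞)⁻¹ * ∑ k ∈ Finset.range n, qn k p * g p := by
          congr 1; funext p
          rw [hμ, mul_assoc, Finset.sum_mul]
      _ = (n:ℝ≥0∞)⁻¹ * ∑' p, ∑ k ∈ Finset.range n, qn k p * g p :=
          ENNReal.tsum_mul_left
      _ = (n:ℝ≥0∞)⁻¹ * ∑ k ∈ Finset.range n, ∑' p, qn k p * g p := by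
          rw [Summable.tsum_finsetSum (fun i _ => ENNReal.summable)]
  have hμmass : ∀ n : ℕ, 1 ≤ n → ∑' p, μ n p = 1 := by
    intro n hn
    have h := hswap n (fun _ => 1)
    simp only [mul_one] at h
    rw [h]
    simp only [hqmass]
    rw [Finset.sum_const, Finset.card_range, nsmul_eq_mul, mul_one]
    exact ENNReal.inv_mul_cancel (Nat.cast_ne_zero.mpr (by omega)) (natCast_ne_top n)
  have hμfin1 : ∀ (Af : Finset (ℕ × ℕ)) (n : ℕ), 1 ≤ n → ∑ p ∈ Af, μ n p ≤ 1 := by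
    intro Af n hn
    exact le_trans (ENNReal.sum_le_tsum Af) (le_of_eq (hμmass n hn))
  have hnn1 : ∀ n : ℕ, 1 ≤ n → ((n:ℝ≥0∞))⁻¹ * (n:ℝ≥0∞) = 1 := fun n hn =>
    ENNReal.inv_mul_cancel (Nat.cast_ne_zero.mpr (by omega)) (natCast_ne_top n)
  have hDn : ∀ n : ℕ, ∑ k ∈ Finset.range n, D k ≤ (n:ℝ≥0∞) := by
    intro n
    calc ∑ k ∈ Finset.range n, D k ≤ ∑ k ∈ Finset.range n, 1 :=
          Finset.sum_le_sum (fun k _ => hD1 k)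
      _ = (n:ℝ≥0∞) := by simp
  have hμT : ∀ n : ℕ, 1 ≤ n →
      ce * ∑' p, μ n p * Te p ≤ (n:ℝ≥0∞)⁻¹ * A 0 + be := by
    intro n hn
    rw [hswap n Te]
    have h1 : ce * ∑ k ∈ Finset.range n, C k
        ≤ A 0 + be * ∑ k ∈ Finset.range n, D k := le_trans le_add_self (htel n)
    calc ce * ((n:ℝ≥0∞)⁻¹ * ∑ k ∈ Finset.range n, ∑' p, qn k p * Te p)
        = (n:ℝ≥0∞)⁻¹ * (ce * ∑ k ∈ Finset.range n, C k) := by rw [hC]; ring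
      _ ≤ (n:ℝ≥0∞)⁻¹ * (A 0 + be * ∑ k ∈ Finset.range n, D k) := mul_le_mul_right h1 _
      _ = (n:ℝ≥0∞)⁻¹ * A 0 + be * ((n:ℝ≥0∞)⁻¹ * ∑ k ∈ Finset.range n, D k) := by ring
      _ ≤ (n:ℝ≥0∞)⁻¹ * A 0 + be * ((n:ℝ≥0∞)⁻¹ * (n:ℝ≥0∞)) := by
          exact add_le_add_right (mul_le_mul_right (mul_le_mul_right (hDn n) _) _) _
      _ = (n:ℝ≥0∞)⁻¹ * A 0 + be := by rw [hnn1 n hn, mul_one]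
  have hμF : ∀ n : ℕ, 1 ≤ n →
      ce ≤ (n:ℝ≥0∞)⁻¹ * A 0 + be * ∑ p ∈ F, μ n p := by
    intro n hn
    have hsumD : ∑ p ∈ F, μ n p = (n:ℝ≥0∞)⁻¹ * ∑ k ∈ Finset.range n, D k := by
      simp only [hμ, hD]
      rw [← Finset.mul_sum, Finset.sum_comm]
    have hcn : ce * (n:ℝ≥0∞) ≤ A 0 + be * ∑ k ∈ Finset.range n, D k := by
      have h2 : ce * (n:ℝ≥0∞) ≤ ce * ∑ k ∈ Finset.range n, C k := by
        refine mul_le_mul_right ?_ _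
        calc (n:ℝ≥0∞) = ∑ k ∈ Finset.range n, 1 := by simp
          _ ≤ ∑ k ∈ Finset.range n, C k := Finset.sum_le_sum (fun k _ => hC1 k)
      exact le_trans h2 (le_trans le_add_self (htel n))
    calc ce = (ce * (n:ℝ≥0∞)) * (n:ℝ≥0∞)⁻¹ := by
          rw [mul_assoc, mul_comm (n:ℝ≥0∞), hnn1 n hn, mul_one]
      _ ≤ (A 0 + be * ∑ k ∈ Finset.range n, D k) * (n:ℝ≥0∞)⁻¹ := mul_le_mul_left hcn _
      _ = (n:ℝ≥0∞)⁻¹ * A 0 + be * ((n:ℝ≥0∞)⁻¹ * ∑ k ∈ Finset.range n, D k) := by ring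
      _ = (n:ℝ≥0∞)⁻¹ * A 0 + be * ∑ p ∈ F, μ n p := by rw [hsumD]
  have hμQ : ∀ (n : ℕ) (q : ℕ × ℕ), 1 ≤ n →
      ∑' p, μ n p * Q p q ≤ μ n q + (n:ℝ≥0∞)⁻¹ := by
    intro n q hn
    rw [hswap n (fun p => Q p q)]
    have hq1 : ∀ k, ∑' p, qn k p * Q p q = qn (k+1) q := fun k => rfl
    have hkey : ∑ k ∈ Finset.range n, qn (k+1) q ≤ ∑ k ∈ Finset.range n, qn k q + 1 := by
      calc ∑ k ∈ Finset.range n, qn (k+1) q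
          ≤ (∑ k ∈ Finset.range n, qn (k+1) q) + qn 0 q := le_self_add
        _ = ∑ k ∈ Finset.range (n+1), qn k q := (Finset.sum_range_succ' (fun k => qn k q) n).symm
        _ = (∑ k ∈ Finset.range n, qn k q) + qn n q := Finset.sum_range_succ _ n
        _ ≤ ∑ k ∈ Finset.range n, qn k q + 1 := add_le_add_right (hqle1 n q) _
    calc (n:ℝ≥0∞)⁻¹ * ∑ k ∈ Finset.range n, ∑' p, qn k p * Q p q
        = (n:ℝ≥0∞)⁻¹ * ∑ k ∈ Finset.range n, qn (k+1) q := rfl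
      _ ≤ (n:ℝ≥0∞)⁻¹ * (∑ k ∈ Finset.range n, qn k q + 1) := mul_le_mul_right hkey _
      _ = μ n q + (n:ℝ≥0∞)⁻¹ := by rw [mul_add, mul_one, hμ]
  -- limits along an ultrafilter extending atTop
  set U : Ultrafilter ℕ := Ultrafilter.of atTop with hUdef
  have hU : (U : Filter ℕ) ≤ atTop := Ultrafilter.of_le _
  have hev : ∀ (pr : ℕ → Prop), (∀ n, 1 ≤ n → pr n) → ∀ᶠ n in (U : Filter ℕ), pr n :=
    fun pr h => (eventually_atTop.mpr ⟨1, h⟩).filter_mono hU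
  have hconv : ∀ p, ∃ x, Tendsto (fun n => μ n p) (U : Filter ℕ) (𝓝 x) := by
    intro p
    obtain ⟨x, -, hx⟩ := isCompact_univ.ultrafilter_le_nhds
      (Ultrafilter.map (fun n => μ n p) U) (by simp)
    exact ⟨x, by rwa [Ultrafilter.coe_map] at hx⟩
  choose ν hν using hconv
  have htinv : Tendsto (fun n : ℕ => ((n:ℝ≥0∞))⁻¹) (U : Filter ℕ) (𝓝 0) :=
    ENNReal.tendsto_inv_nat_nhds_zero.mono_left hU
  have htA0 : Tendsto (fun n : ℕ => ((n:ℝ≥0∞))⁻¹ * A 0) (U : Filter ℕ) (𝓝 0) := by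
    have := ENNReal.Tendsto.mul_const htinv (Or.inr (hAfin 0))
    simpa using this
  have hν_fin_le1 : ∀ Af : Finset (ℕ × ℕ), ∑ p ∈ Af, ν p ≤ 1 := by
    intro Af
    have h1 : Tendsto (fun n => ∑ p ∈ Af, μ n p) (U : Filter ℕ) (𝓝 (∑ p ∈ Af, ν p)) :=
      tendsto_finset_sum _ fun p _ => hν p
    exact le_of_tendsto h1 (hev _ fun n hn => hμfin1 Af n hn)
  have hνle1 : ∑' p, ν p ≤ 1 := by
    rw [ENNReal.tsum_eq_iSup_sum]
    exact iSup_le hν_fin_le1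
  have hνne : ∀ p, ν p ≠ ⊤ := fun p =>
    (lt_of_le_of_lt (le_trans (ENNReal.le_tsum p) hνle1) one_lt_top).ne
  have hνF : ce ≤ be * ∑ p ∈ F, ν p := by
    have h2 : Tendsto (fun n : ℕ => ((n:ℝ≥0∞))⁻¹ * A 0 + be * ∑ p ∈ F, μ n p)
        (U : Filter ℕ) (𝓝 (0 + be * ∑ p ∈ F, ν p)) :=
      Tendsto.add htA0 (ENNReal.Tendsto.const_mul
        (tendsto_finset_sum _ fun p _ => hν p) (Or.inr hbene))
    have h3 := ge_of_tendsto h2 (hev _ fun n hn => hμF n hn)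
    simpa using h3
  have hνT' : ∀ Af : Finset (ℕ × ℕ), ce * ∑ p ∈ Af, ν p * Te p ≤ be := by
    intro Af
    have h1 : Tendsto (fun n => ce * ∑ p ∈ Af, μ n p * Te p)
        (U : Filter ℕ) (𝓝 (ce * ∑ p ∈ Af, ν p * Te p)) :=
      ENNReal.Tendsto.const_mul (tendsto_finset_sum _ fun p _ =>
        ENNReal.Tendsto.mul_const (hν p) (Or.inr (hTene p))) (Or.inr hcene)
    have h2 : Tendsto (fun n : ℕ => ((n:ℝ≥0∞))⁻¹ * A 0 + be)
        (U : Filter ℕ) (𝓝 (0 + be)) := Tendsto.add htA0 tendsto_const_nhds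
    have key : ∀ᶠ n in (U : Filter ℕ),
        ce * ∑ p ∈ Af, μ n p * Te p ≤ ((n:ℝ≥0∞))⁻¹ * A 0 + be :=
      hev _ fun n hn => le_trans
        (mul_le_mul_right (ENNReal.sum_le_tsum Af) ce) (hμT n hn)
    have h3 := le_of_tendsto_of_tendsto h1 h2 key
    simpa using h3
  have hνT : ∑' p, ν p * Te p ≤ be / ce := by
    rw [ENNReal.tsum_eq_iSup_sum]
    refine iSup_le fun Af => ?_
    rw [ENNReal.le_div_iff_mul_le (Or.inl hce0) (Or.inl hcene)]
    rw [mul_comm]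
    exact hνT' Af
  have hinvle : ∀ q, ∑' p, ν p * Q p q ≤ ν q := by
    intro q
    rw [ENNReal.tsum_eq_iSup_sum]
    refine iSup_le fun Af => ?_
    have h1 : Tendsto (fun n => ∑ p ∈ Af, μ n p * Q p q)
        (U : Filter ℕ) (𝓝 (∑ p ∈ Af, ν p * Q p q)) :=
      tendsto_finset_sum _ fun p _ =>
        ENNReal.Tendsto.mul_const (hν p) (Or.inr (hQne p q))
    have h2 : Tendsto (fun n : ℕ => μ n q + ((n:ℝ≥0∞))⁻¹)
        (U : Filter ℕ) (𝓝 (ν q + 0)) := Tendsto.add (hν q) htinv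
    have key : ∀ᶠ n in (U : Filter ℕ),
        ∑ p ∈ Af, μ n p * Q p q ≤ μ n q + ((n:ℝ≥0∞))⁻¹ :=
      hev _ fun n hn => le_trans (ENNReal.sum_le_tsum Af) (hμQ n q hn)
    have h3 := le_of_tendsto_of_tendsto h1 h2 key
    simpa using h3
  have hmassQ : ∑' q, ∑' p, ν p * Q p q = ∑' p, ν p := by
    rw [ENNReal.tsum_comm]
    congr 1
    funext p
    rw [ENNReal.tsum_mul_left, hQrow p, mul_one]
  have hinveq : ∀ q, ∑' p, ν p * Q p q = ν q := by
    intro q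
    by_contra hne
    have hlt : ∑' p, ν p * Q p q < ν q := (hinvle q).lt_of_ne hne
    have hfin : ∑' q', ∑' p, ν p * Q p q' ≠ ⊤ := by
      rw [hmassQ]
      exact (lt_of_le_of_lt hνle1 one_lt_top).ne
    have h5 : ∑' q', ∑' p, ν p * Q p q' < ∑' q', ν q' :=
      ENNReal.tsum_lt_tsum hfin hinvle hlt
    rw [hmassQ] at h5
    exact lt_irrefl _ h5
  have hνsum_ne0 : ∑' p, ν p ≠ 0 := by
    intro h0
    have hF0 : ∑ p ∈ F, ν p = 0 := by
      have := ENNReal.sum_le_tsum (f := ν) F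
      rw [h0] at this
      exact le_antisymm this zero_le
    rw [hF0, mul_zero] at hνF
    exact hce0 (le_antisymm hνF zero_le)
  -- the invariant measure for P
  set πe : ℕ × ℕ → ℝ≥0∞ :=
    fun q => ∑' p, ν p * ∑ k ∈ Finset.range (T p), FKaux.kE Pe k p q with hπe
  set M : ℝ≥0∞ := ∑' p, ν p * Te p with hM
  have hπemass : ∑' q, πe q = M := by
    rw [hπe, hM, ENNReal.tsum_comm]
    congr 1
    funext p
    rw [ENNReal.tsum_mul_left]
    congr 1
    rw [Summable.tsum_finsetSum (fun k _ => ENNReal.summable)]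
    simp only [hkrow]
    rw [Finset.sum_const, Finset.card_range, nsmul_eq_mul, mul_one]
  have hMne_top : M ≠ ⊤ :=
    (lt_of_le_of_lt hνT (ENNReal.div_lt_top hbene hce0)).ne
  have hMne0 : M ≠ 0 := by
    have hle : ∑' p, ν p ≤ M := by
      rw [hM]
      exact ENNReal.tsum_le_tsum fun p => le_mul_of_one_le_right' (hTe1 p)
    intro h0
    rw [h0] at hle
    exact hνsum_ne0 (le_antisymm hle zero_le)
  have hπe_ne_top : ∀ q, πe q ≠ ⊤ := by
    intro q
    have : πe q ≤ M := by rw [← hπemass]; exact ENNReal.le_tsum q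
    exact (lt_of_le_of_lt this (lt_top_iff_ne_top.mpr hMne_top)).ne
  have hinvP : ∀ r, ∑' q, πe q * Pe q r = πe r := by
    intro r
    have hstep1 : ∑' q, πe q * Pe q r
        = ∑' p, ν p * ∑ k ∈ Finset.range (T p), FKaux.kE Pe (k+1) p r := by
      calc ∑' q, πe q * Pe q r
          = ∑' q, ∑' p, (ν p * ∑ k ∈ Finset.range (T p), FKaux.kE Pe k p q) * Pe q r := by
            congr 1; funext q; rw [hπe, ENNReal.tsum_mul_right]
        _ = ∑' p, ∑' q, (ν p * ∑ k ∈ Finset.range (T p), FKaux.kE Pe k p q) * Pe q r :=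
            ENNReal.tsum_comm
        _ = ∑' p, ν p * ∑ k ∈ Finset.range (T p), FKaux.kE Pe (k+1) p r := by
            congr 1; funext p
            calc ∑' q, (ν p * ∑ k ∈ Finset.range (T p), FKaux.kE Pe k p q) * Pe q r
                = ∑' q, ν p * ((∑ k ∈ Finset.range (T p), FKaux.kE Pe k p q) * Pe q r) := by
                  congr 1; funext q; rw [mul_assoc]
              _ = ν p * ∑' q, (∑ k ∈ Finset.range (T p), FKaux.kE Pe k p q) * Pe q r :=
                  ENNReal.tsum_mul_left
              _ = ν p * ∑' q, ∑ k ∈ Finset.range (T p), FKaux.kE Pe k p q * Pe q r := by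
                  congr 1
                  exact tsum_congr fun q => Finset.sum_mul _ _ _
              _ = ν p * ∑ k ∈ Finset.range (T p), ∑' q, FKaux.kE Pe k p q * Pe q r := by
                  rw [Summable.tsum_finsetSum (fun k _ => ENNReal.summable)]
              _ = ν p * ∑ k ∈ Finset.range (T p), FKaux.kE Pe (k+1) p r := by
                  congr 1
                  exact Finset.sum_congr rfl fun k _ => (FKaux.kE_succ' Pe k p r).symm
    have hdelta : ∑' p, ν p * FKaux.kE Pe 0 p r = ν r := by
      have hpt : ∀ p, ν p * FKaux.kE Pe 0 p r = if p = r then ν p else 0 := by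
        intro p; by_cases h : p = r <;> simp [FKaux.kE, h]
      calc ∑' p, ν p * FKaux.kE Pe 0 p r = ∑' p, (if p = r then ν p else 0) := tsum_congr hpt
        _ = ν r := by rw [tsum_eq_single r (fun b hb => if_neg hb)]; simp
    have hQr : ∑' p, ν p * Q p r = ν r := hinveq r
    have hboth : (∑' q, πe q * Pe q r) + ν r = πe r + ν r := by
      calc (∑' q, πe q * Pe q r) + ν r
          = (∑' p, ν p * ∑ k ∈ Finset.range (T p), FKaux.kE Pe (k+1) p r)
              + ∑' p, ν p * FKaux.kE Pe 0 p r := by rw [hstep1, hdelta]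
        _ = ∑' p, (ν p * ∑ k ∈ Finset.range (T p), FKaux.kE Pe (k+1) p r
              + ν p * FKaux.kE Pe 0 p r) := (ENNReal.tsum_add).symm
        _ = ∑' p, ν p * (∑ k ∈ Finset.range (T p), FKaux.kE Pe (k+1) p r
              + FKaux.kE Pe 0 p r) := by
            congr 1; funext p; rw [mul_add]
        _ = ∑' p, ν p * (∑ k ∈ Finset.range (T p), FKaux.kE Pe k p r
              + FKaux.kE Pe (T p) p r) := by
            congr 1; funext p; congr 1
            have h1 := Finset.sum_range_succ' (fun k => FKaux.kE Pe k p r) (T p)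
            rw [← h1]
            exact Finset.sum_range_succ _ _
        _ = ∑' p, (ν p * ∑ k ∈ Finset.range (T p), FKaux.kE Pe k p r
              + ν p * FKaux.kE Pe (T p) p r) := by
            congr 1; funext p; rw [mul_add]
        _ = (∑' p, ν p * ∑ k ∈ Finset.range (T p), FKaux.kE Pe k p r)
              + ∑' p, ν p * FKaux.kE Pe (T p) p r := ENNReal.tsum_add
        _ = πe r + ν r := by rw [← hQr]
    have hνrne : ν r ≠ ⊤ := hνne r
    rw [add_comm (∑' q, πe q * Pe q r), add_comm (πe r)] at hboth
    exact (ENNReal.add_right_inj hνrne).mp hboth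
  -- conclusion
  have hMrne0 : M.toReal ≠ 0 := ENNReal.toReal_ne_zero.mpr ⟨hMne0, hMne_top⟩
  refine ⟨fun q => (πe q).toReal / M.toReal, ?_, ?_, ?_⟩
  · intro q
    exact div_nonneg ENNReal.toReal_nonneg ENNReal.toReal_nonneg
  · have h1 : ∑' q, (πe q).toReal / M.toReal = (∑' q, (πe q).toReal) * (M.toReal)⁻¹ := by
      simp_rw [div_eq_mul_inv]
      exact tsum_mul_right
    rw [h1, ← ENNReal.tsum_toReal_eq hπe_ne_top, hπemass, mul_inv_cancel₀ hMrne0]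
  · intro r
    have hterm : ∀ q, (πe q).toReal / M.toReal * P q r
        = (πe q * Pe q r).toReal * (M.toReal)⁻¹ := by
      intro q
      rw [ENNReal.toReal_mul]
      have hqr : (Pe q r).toReal = P q r := ENNReal.toReal_ofReal (hP0 q r)
      rw [hqr]
      ring
    calc ∑' q, (πe q).toReal / M.toReal * P q r
        = ∑' q, (πe q * Pe q r).toReal * (M.toReal)⁻¹ := tsum_congr hterm
      _ = (∑' q, (πe q * Pe q r).toReal) * (M.toReal)⁻¹ := tsum_mul_right
      _ = ((∑' q, πe q * Pe q r).toReal) * (M.toReal)⁻¹ := by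
          rw [← ENNReal.tsum_toReal_eq
            (fun q => ENNReal.mul_ne_top (hπe_ne_top q) ofReal_ne_top)]
      _ = (πe r).toReal * (M.toReal)⁻¹ := by rw [hinvP r]
      _ = (πe r).toReal / M.toReal := (div_eq_mul_inv _ _).symm
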